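/- Let n ≥ 1, j ≥ 1, s ∈ {0,…,n} and set α = s/n. Then the probability that an activated agent holding opinion b adopts opinion a satisfies q_{2j+1}(s) = q_{2j}(s) + ((2α − 1)/2)·C(2j, j)·α^j·(1−α)^j, and the probability that an activated agent holding opinion a adopts opinion b satisfies 1 − q_{2j+1}(s) = (1 − q_{2j}(s)) − ((2α − 1)/2)·C(2j, j)·α^j·(1−α)^j. -/
import Mathlib


open MeasureTheory Finset
open scoped ENNReal NNReal

noncomputable section

/-- Probability mass function of a binomial random variable `Bin(m, p)` at `k`. -/
def binomPMF (m k : ℕ) (p : ℝ) : ℝ := (m.choose k : ℝ) * p ^ k * (1 - p) ^ (m - k)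

/-- Tail probability `P(Bin(m, p) ≥ j)`. -/
def binomTail (m j : ℕ) (p : ℝ) : ℝ := ∑ k ∈ Finset.Icc j m, binomPMF m k p

/-- Cumulative distribution function `P(Bin(m, p) ≤ j)`. -/
def binomCDF (m j : ℕ) (p : ℝ) : ℝ := ∑ k ∈ Finset.range (j + 1), binomPMF m k p

/-- `majProb n j s` is the sample-majority probability `q_j(s)`: the probability that an
agent sampling `j` agents uniformly at random with replacement (when `s` of the `n` agents
hold opinion `a`) adopts opinion `a` under majority with uniform tie-breaking.
For odd `j = 2m+1` this is `P(Bin(2m+1, s/n) ≥ m+1)`; for even `j = 2m` it is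
`P(Bin(2m, s/n) ≥ m+1) + (1/2)·P(Bin(2m, s/n) = m)`. -/
def majProb (n j s : ℕ) : ℝ :=
  binomTail j (j / 2 + 1) ((s : ℝ) / n) +
    if Even j then (1 / 2) * binomPMF j (j / 2) ((s : ℝ) / n) else 0

/-- One-step transition kernel of the sequential `j`-Majority process on states `{0, …, n}`:
from state `s`, move to `s+1` with probability `((n-s)/n)·q_j(s)`, to `s-1` with probability
`(s/n)·(1-q_j(s))`, and stay at `s` otherwise. -/
def seqKernel (n j : ℕ) (s u : ℕ) : ℝ :=
  if u = s + 1 then (((n : ℝ) - s) / n) * majProb n j s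
  else if u + 1 = s then ((s : ℝ) / n) * (1 - majProb n j s)
  else if u = s then
    1 - (((n : ℝ) - s) / n) * majProb n j s - ((s : ℝ) / n) * (1 - majProb n j s)
  else 0

/-- One-step transition kernel of the gossip `j`-Majority process on states `{0, …, n}`:
from state `s`, the next state is distributed as `Bin(n, q_j(s))`. -/
def gossipKernel (n j : ℕ) (s u : ℕ) : ℝ := binomPMF n u (majProb n j s)

/-- `kernelTail K n s d` is the mass that the kernel `K` places, from state `s`,
on the set `{d, d+1, …, n}`, i.e. `P(X_{t+1} ≥ d | X_t = s)`. -/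
def kernelTail (K : ℕ → ℕ → ℝ) (n s d : ℕ) : ℝ := ∑ u ∈ Finset.Icc d n, K s u

/-- `IsMarkovChain μ K x X` states that, under the probability measure `μ`, the process
`X` is a Markov chain with one-step transition kernel `K` started at `x`: `X 0 = x`
almost surely, and conditionally on any finite path the next state is distributed
according to `K` applied to the current state. -/
def IsMarkovChain {Ω : Type*} [MeasurableSpace Ω] (μ : Measure Ω)
    (K : ℕ → ℕ → ℝ) (x : ℕ) (X : ℕ → Ω → ℕ) : Prop :=
  IsProbabilityMeasure μ ∧
  (∀ t, Measurable (X t)) ∧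
  μ {ω | X 0 ω = x} = 1 ∧
  ∀ (t : ℕ) (p : ℕ → ℕ) (u : ℕ),
    μ ({ω | X (t + 1) ω = u} ∩ {ω | ∀ i ≤ t, X i ω = p i}) =
      ENNReal.ofReal (K (p t) u) * μ {ω | ∀ i ≤ t, X i ω = p i}

/-- The convergence (hitting) time: the first time `t` with `X t ∈ {0, n}`
(`⊤` if the process never reaches a consensus state). -/
def hitTime {Ω : Type*} (n : ℕ) (X : ℕ → Ω → ℕ) (ω : Ω) : ℕ∞ :=
  ⨅ (t : ℕ) (_ : X t ω = 0 ∨ X t ω = n), (t : ℕ∞)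

lemma pmf_succ (m i : ℕ) (hi : i ≤ m) (p : ℝ) :
    binomPMF (m + 1) (i + 1) p = p * binomPMF m i p + (1 - p) * binomPMF m (i + 1) p := by
  rcases eq_or_lt_of_le hi with h | h
  · subst h
    simp [binomPMF]
    ring
  · unfold binomPMF
    rw [Nat.choose_succ_succ]
    push_cast
    have h2 : m - i = (m - (i + 1)) + 1 := by omega
    rw [Nat.succ_eq_add_one, h2]
    ring

lemma tail_split (m r : ℕ) (h : r ≤ m) (p : ℝ) :
    binomTail m r p = binomPMF m r p + binomTail m (r + 1) p := by
  unfold binomTail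
  rw [Finset.Icc_eq_cons_Ioc h, Finset.sum_cons, ← Finset.Icc_add_one_left_eq_Ioc]

lemma tail_succ (m r : ℕ) (h : r ≤ m) (p : ℝ) :
    binomTail (m + 1) (r + 1) p = binomTail m (r + 1) p + p * binomPMF m r p := by
  have key : binomTail (m + 1) (r + 1) p
      = ∑ i ∈ Finset.Icc r m, binomPMF (m + 1) (i + 1) p := by
    unfold binomTail
    rw [← Finset.map_add_right_Icc r m 1, Finset.sum_map]
    rfl
  rw [key]
  have : ∀ i ∈ Finset.Icc r m, binomPMF (m + 1) (i + 1) p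
      = p * binomPMF m i p + (1 - p) * binomPMF m (i + 1) p := by
    intro i hi
    exact pmf_succ m i (Finset.mem_Icc.mp hi).2 p
  rw [Finset.sum_congr rfl this, Finset.sum_add_distrib, ← Finset.mul_sum, ← Finset.mul_sum]
  have h2 : ∑ i ∈ Finset.Icc r m, binomPMF m (i + 1) p = binomTail m (r + 1) p := by
    have e1 : ∑ i ∈ Finset.Icc r m, binomPMF m (i + 1) p
        = ∑ k ∈ Finset.Icc (r + 1) (m + 1), binomPMF m k p := by
      rw [← Finset.map_add_right_Icc r m 1, Finset.sum_map]
      rfl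
    have e0 : binomPMF m (m + 1) p = 0 := by
      simp [binomPMF, Nat.choose_eq_zero_of_lt (Nat.lt_succ_self m)]
    rw [e1, Finset.sum_Icc_succ_top (show r + 1 ≤ m + 1 by omega), e0, add_zero]
    rfl
  have h3 : ∑ i ∈ Finset.Icc r m, binomPMF m i p = binomTail m r p := rfl
  rw [h2, h3, tail_split m r h p]
  ring

theorem stmt8 (n j s : ℕ) (hn : 1 ≤ n) (hj : 1 ≤ j) (hs : s ≤ n) :
    majProb n (2 * j + 1) s =
      majProb n (2 * j) s +
        ((2 * ((s : ℝ) / n) - 1) / 2) * ((2 * j).choose j : ℝ) *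
          ((s : ℝ) / n) ^ j * (1 - (s : ℝ) / n) ^ j ∧
    1 - majProb n (2 * j + 1) s =
      (1 - majProb n (2 * j) s) -
        ((2 * ((s : ℝ) / n) - 1) / 2) * ((2 * j).choose j : ℝ) *
          ((s : ℝ) / n) ^ j * (1 - (s : ℝ) / n) ^ j := by
  set α := (s : ℝ) / n with hα
  have hodd : ¬ Even (2 * j + 1) := by simp [Nat.even_add_one]
  have e1 : (2 * j + 1) / 2 = j := by omega
  have e2 : (2 * j) / 2 = j := by omega
  have first : majProb n (2 * j + 1) s =
      majProb n (2 * j) s +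
        ((2 * α - 1) / 2) * ((2 * j).choose j : ℝ) * α ^ j * (1 - α) ^ j := by
    unfold majProb
    rw [e1, e2, if_neg hodd, if_pos (even_two_mul j), add_zero, ← hα,
      tail_succ (2 * j) j (by omega) α]
    unfold binomPMF
    rw [show 2 * j - j = j by omega]
    ring
  exact ⟨first, by rw [first]; ring⟩
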